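/- Let U ⊆ ℝⁿ be open, x₀ ∈ U, and let s : U → ℝᵏ and t₁, …, t_m : U → ℝᵏ be differentiable at x₀. Define F : U × ℝᵐ → ℝᵏ by F(x, a) = s(x) + Σ_{j=1}^{m} a_j • t_j(x). If the range of the derivative of s at x₀ together with the linear span of { t₁(x₀), …, t_m(x₀) } is all of ℝᵏ, then the derivative of F at (x₀, 0) is a surjective linear map ℝⁿ × ℝᵐ → ℝᵏ. -/

import Mathlib

/-- Parametric transversality step: if the range of `Ds(x₀)` together with the span of the
values `t j x₀` is all of `ℝᵏ`, then `F(x, a) = s x + Σ j, a j • t j x` has surjective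
derivative at `(x₀, 0)`. -/
theorem stmt_13 {n m k : ℕ}
    (U : Set (Fin n → ℝ)) (hU : IsOpen U) (x₀ : Fin n → ℝ) (hx₀ : x₀ ∈ U)
    (s : (Fin n → ℝ) → (Fin k → ℝ)) (t : Fin m → (Fin n → ℝ) → (Fin k → ℝ))
    (hs : DifferentiableAt ℝ s x₀) (ht : ∀ j, DifferentiableAt ℝ (t j) x₀)
    (hspan :
      LinearMap.range (fderiv ℝ s x₀).toLinearMap ⊔ Submodule.span ℝ (Set.range fun j => t j x₀) = ⊤) :
    Function.Surjective
      (fderiv ℝ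
        (fun p : (Fin n → ℝ) × (Fin m → ℝ) => s p.1 + ∑ j, p.2 j • t j p.1)
        ((x₀, 0) : (Fin n → ℝ) × (Fin m → ℝ))) := by
  set L : ((Fin n → ℝ) × (Fin m → ℝ)) →L[ℝ] (Fin k → ℝ) :=
    ((fderiv ℝ s x₀).comp (ContinuousLinearMap.fst ℝ _ _)) +
      ∑ j : Fin m,
        (((ContinuousLinearMap.proj j : ((Fin m → ℝ)) →L[ℝ] ℝ).comp
            (ContinuousLinearMap.snd ℝ (Fin n → ℝ) (Fin m → ℝ))).smulRight (t j x₀)) with hL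
  have hderiv : HasFDerivAt
      (fun p : (Fin n → ℝ) × (Fin m → ℝ) => s p.1 + ∑ j, p.2 j • t j p.1) L
      ((x₀, 0) : (Fin n → ℝ) × (Fin m → ℝ)) := by
    have h1 : HasFDerivAt (fun p : (Fin n → ℝ) × (Fin m → ℝ) => s p.1)
        ((fderiv ℝ s x₀).comp (ContinuousLinearMap.fst ℝ _ _)) (x₀, 0) :=
      (hs.hasFDerivAt).comp _ (hasFDerivAt_fst)
    have h2 : ∀ j : Fin m, HasFDerivAt (fun p : (Fin n → ℝ) × (Fin m → ℝ) => p.2 j • t j p.1)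
        ((((ContinuousLinearMap.proj j : ((Fin m → ℝ)) →L[ℝ] ℝ).comp
            (ContinuousLinearMap.snd ℝ (Fin n → ℝ) (Fin m → ℝ))).smulRight (t j x₀)))
        ((x₀, 0) : (Fin n → ℝ) × (Fin m → ℝ)) := by
      intro j
      have hc : HasFDerivAt (fun p : (Fin n → ℝ) × (Fin m → ℝ) => p.2 j)
          ((ContinuousLinearMap.proj j : ((Fin m → ℝ)) →L[ℝ] ℝ).comp
            (ContinuousLinearMap.snd ℝ (Fin n → ℝ) (Fin m → ℝ))) (x₀, 0) :=
        ((ContinuousLinearMap.proj j : ((Fin m → ℝ)) →L[ℝ] ℝ).comp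
            (ContinuousLinearMap.snd ℝ (Fin n → ℝ) (Fin m → ℝ))).hasFDerivAt
      have hf : HasFDerivAt (fun p : (Fin n → ℝ) × (Fin m → ℝ) => t j p.1)
          ((fderiv ℝ (t j) x₀).comp (ContinuousLinearMap.fst ℝ _ _)) (x₀, 0) :=
        ((ht j).hasFDerivAt).comp _ (hasFDerivAt_fst)
      have := hc.smul hf
      simpa using this
    have := h1.add (HasFDerivAt.sum (u := Finset.univ) (fun j _ => h2 j))
    simpa [hL] using this
  rw [hderiv.fderiv]
  intro y
  have hy : y ∈ LinearMap.range (fderiv ℝ s x₀).toLinearMap ⊔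
      Submodule.span ℝ (Set.range fun j => t j x₀) := hspan ▸ Submodule.mem_top
  obtain ⟨u, hu, v, hv, huv⟩ := Submodule.mem_sup.mp hy
  obtain ⟨a, ha⟩ := hu
  obtain ⟨c, hc⟩ := (Finsupp.mem_span_range_iff_exists_finsupp).mp hv
  refine ⟨(a, fun j => c j), ?_⟩
  simp only [hL, ContinuousLinearMap.add_apply, ContinuousLinearMap.coe_comp',
    Function.comp_apply, ContinuousLinearMap.coe_fst', ContinuousLinearMap.sum_apply,
    ContinuousLinearMap.smulRight_apply, ContinuousLinearMap.coe_snd',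
    ContinuousLinearMap.proj_apply]
  rw [show (fderiv ℝ s x₀) a = u from ha, ← huv, ← hc]
  congr 1
  rw [Finsupp.sum_fintype]
  intro j; simp
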